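/- If • and * are binary operations on a set X that both belong to ZBin(X), then their product binary operation x □ y := (x • y) * (y • x) also belongs to ZBin(X). -/
import Mathlib


/-- The product of two binary operations on `X`: `x □ y := (x • y) * (y • x)`. -/
def box {X : Type*} (f g : X → X → X) : X → X → X :=
  fun x y => g (f x y) (f y x)

/-- A binary operation `•` is in the center `ZBin(X)` if for every binary operation `*`
and all `x, y`, `(x * y) • (y * x) = (x • y) * (y • x)`. -/
def ZBin {X : Type*} (bullet : X → X → X) : Prop :=
  ∀ star : X → X → X, ∀ x y : X,
    bullet (star x y) (star y x) = star (bullet x y) (bullet y x)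

/-- The product of two members of `ZBin(X)` is again in `ZBin(X)`. -/
theorem box_mem_ZBin {X : Type*} (bullet star : X → X → X)
    (hb : ZBin bullet) (hs : ZBin star) :
    ZBin (box bullet star) := by
  intro g x y
  simp only [box]
  rw [hb g x y, hb g y x, hs g]
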